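/- Let t > 1 and s, k1, k2, k3 ∈ ℝ. Suppose F : (0,∞)^2 → ℝ is twice continuously differentiable, and define G : (0,∞)^6 → ℝ by G(u1,v1,u2,v2,u3,v3) = F(u1 v1/(u3 v3), u2 v2/(u3 v3)) · (v1/u1)^{k2} · (v2/u2)^{k3} · (v3/u3)^{k1} · (u3 v3)^s. Assume that on all of (0,∞)^6 the mixed second partial derivatives satisfy ∂²G/∂u1∂v1 = ∂²G/∂u2∂v2 = ∂²G/∂u3∂v3. Define, for x1, x2, x3 > t, u = t^2 (x1-1)(x2-1)(x3-1)/((t-1)^2 x1 x2 x3), v = (x1-t)(x2-t)(x3-t)/((t-1)^2 x1 x2 x3), and K(x1,x2,x3) = (x1 x2 x3)^s F(u,v). Then D_{x1} K = D_{x2} K = D_{x3} K on the region {x1, x2, x3 > t}, where D_x is the differential operator D_x f = d/dx ( x(x-1)(x-t) df/dx ) - s(s+2) x f - (k1^2 t / x) f + (k2^2 (t-1)/(x-1)) f - (k3^2 t(t-1)/(x-t)) f applied in the corresponding variable. -/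

import Mathlib

set_option maxHeartbeats 1600000
open Set Real


/-- The second-order operator `D_x` of the quantized Hitchin system for rank 2 bundles on `P¹`
with 4 regular singular points `0, 1, t, ∞`:
`D_x f = d/dx (x(x-1)(x-t) f') - s(s+2)x f - k1²t/x f + k2²(t-1)/(x-1) f - k3²t(t-1)/(x-t) f`. -/
noncomputable def hitchinOp (t s k1 k2 k3 : ℝ) (f : ℝ → ℝ) (x : ℝ) : ℝ :=
  deriv (fun y => y * (y - 1) * (y - t) * deriv f y) x -
    s * (s + 2) * x * f x - k1 ^ 2 * t / x * f x +
    k2 ^ 2 * (t - 1) / (x - 1) * f x - k3 ^ 2 * t * (t - 1) / (x - t) * f x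

/-- The auxiliary function `G(u1,v1,u2,v2,u3,v3)` built from `F` in Theorem 3.3.2. -/
noncomputable def auxG13 (s k1 k2 k3 : ℝ) (F : ℝ × ℝ → ℝ) (u1 v1 u2 v2 u3 v3 : ℝ) : ℝ :=
  F (u1 * v1 / (u3 * v3), u2 * v2 / (u3 * v3)) *
    (v1 / u1) ^ k2 * (v2 / u2) ^ k3 * (v3 / u3) ^ k1 * (u3 * v3) ^ s

/-- The kernel `K(x1,x2,x3) = (x1 x2 x3)^s F(u,v)` of Theorem 3.3.2. -/
noncomputable def kern13 (t s : ℝ) (F : ℝ × ℝ → ℝ) (x1 x2 x3 : ℝ) : ℝ :=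
  (x1 * x2 * x3) ^ s *
    F (t ^ 2 * (x1 - 1) * (x2 - 1) * (x3 - 1) / ((t - 1) ^ 2 * (x1 * x2 * x3)),
       (x1 - t) * (x2 - t) * (x3 - t) / ((t - 1) ^ 2 * (x1 * x2 * x3)))

noncomputable def d1 (H : ℝ × ℝ → ℝ) (p : ℝ × ℝ) : ℝ := fderiv ℝ H p (1, 0)
noncomputable def d2 (H : ℝ × ℝ → ℝ) (p : ℝ × ℝ) : ℝ := fderiv ℝ H p (0, 1)

lemma hasDerivAt_comp2 (H : ℝ × ℝ → ℝ) {x u' v' : ℝ} {u v : ℝ → ℝ}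
    (hH : DifferentiableAt ℝ H (u x, v x))
    (hu : HasDerivAt u u' x) (hv : HasDerivAt v v' x) :
    HasDerivAt (fun y => H (u y, v y)) (d1 H (u x, v x) * u' + d2 H (u x, v x) * v') x := by
  have h := hH.hasFDerivAt.comp_hasDerivAt x (hu.prodMk hv)
  refine h.congr_deriv ?_
  have he : ((u', v') : ℝ × ℝ) = u' • ((1:ℝ), (0:ℝ)) + v' • ((0:ℝ), (1:ℝ)) := by
    simp [Prod.ext_iff]
  rw [he, map_add, map_smul, map_smul]
  simp [d1, d2, smul_eq_mul]
  ring

lemma diffAt_of_contDiffOn {F : ℝ × ℝ → ℝ}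
    (hF : ContDiffOn ℝ 2 F (Set.Ioi (0:ℝ) ×ˢ Set.Ioi (0:ℝ)))
    {p : ℝ × ℝ} (hp : p ∈ (Set.Ioi (0:ℝ) ×ˢ Set.Ioi (0:ℝ))) :
    DifferentiableAt ℝ F p :=
  (hF.contDiffAt (((isOpen_Ioi).prod isOpen_Ioi).mem_nhds hp)).differentiableAt (by norm_num)

lemma diffAt_d12 {F : ℝ × ℝ → ℝ}
    (hF : ContDiffOn ℝ 2 F (Set.Ioi (0:ℝ) ×ˢ Set.Ioi (0:ℝ)))
    {p : ℝ × ℝ} (hp : p ∈ (Set.Ioi (0:ℝ) ×ˢ Set.Ioi (0:ℝ))) :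
    DifferentiableAt ℝ (d1 F) p ∧ DifferentiableAt ℝ (d2 F) p := by
  have hO : IsOpen (Set.Ioi (0:ℝ) ×ˢ Set.Ioi (0:ℝ)) := (isOpen_Ioi).prod isOpen_Ioi
  have h1 : ContDiffOn ℝ 1 (fderiv ℝ F) (Set.Ioi (0:ℝ) ×ˢ Set.Ioi (0:ℝ)) :=
    hF.fderiv_of_isOpen hO (by norm_num)
  exact ⟨((h1.clm_apply contDiffOn_const).contDiffAt (hO.mem_nhds hp)).differentiableAt
      (by norm_num),
    ((h1.clm_apply contDiffOn_const).contDiffAt (hO.mem_nhds hp)).differentiableAt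
      (by norm_num)⟩

section Gpart
variable {s k1 k2 k3 : ℝ} {F : ℝ × ℝ → ℝ}
  (hF : ContDiffOn ℝ 2 F (Set.Ioi (0:ℝ) ×ˢ Set.Ioi (0:ℝ)))


/-- inner derivative for the (u1,v1) mixed partial -/
lemma inner1 (hF : ContDiffOn ℝ 2 F (Set.Ioi (0:ℝ) ×ˢ Set.Ioi (0:ℝ)))
    {Q : ℝ} (hQ : 0 < Q) {a : ℝ} (ha : 0 < a) :
    deriv (fun b => auxG13 s k1 k2 k3 F a b Q 1 1 1) 1
      = (1/a) ^ k2 * (1/Q) ^ k3 * (a * d1 F (a, Q) + k2 * F (a, Q)) := by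
  have hne : (1:ℝ)/a ≠ 0 := one_div_ne_zero ha.ne'
  have hd : DifferentiableAt ℝ F (a * 1, Q) := by
    simpa using diffAt_of_contDiffOn hF (p := (a, Q)) ⟨ha, hQ⟩
  have hu : HasDerivAt (fun b : ℝ => a * b) a 1 := by
    simpa using (hasDerivAt_id (1:ℝ)).const_mul a
  have h1 : HasDerivAt (fun b : ℝ => F (a * b, Q))
      (d1 F (a * 1, Q) * a + d2 F (a * 1, Q) * 0) 1 :=
    hasDerivAt_comp2 (u := fun b => a * b) (v := fun _ => Q) F hd hu (hasDerivAt_const 1 Q)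
  have hb : HasDerivAt (fun b : ℝ => b / a) (1 / a) 1 := (hasDerivAt_id (1:ℝ)).div_const a
  have h2 : HasDerivAt (fun b : ℝ => (b / a) ^ k2) (k2 * ((1:ℝ)/a) ^ (k2 - 1) * (1 / a)) 1 := by
    have := hb.rpow_const (p := k2) (Or.inl hne)
    convert this using 1 <;> ring
  have h3 := (h1.fun_mul h2).mul_const (((1:ℝ)/Q) ^ k3)
  have hfun : (fun b => auxG13 s k1 k2 k3 F a b Q 1 1 1)
      = fun b : ℝ => F (a * b, Q) * (b / a) ^ k2 * ((1:ℝ)/Q) ^ k3 := by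
    funext b; simp [auxG13]
  rw [hfun, h3.deriv]
  have hr : ((1:ℝ)/a) ^ (k2 - 1) * (1 / a) = (1 / a) ^ k2 := by
    rw [← Real.rpow_add_one hne (k2 - 1)]; ring_nf
  simp only [mul_one]
  rw [show k2 * ((1:ℝ)/a) ^ (k2 - 1) * (1 / a) = k2 * (((1:ℝ)/a) ^ (k2 - 1) * (1 / a)) by ring,
    hr]
  ring
lemma outer1 (hF : ContDiffOn ℝ 2 F (Set.Ioi (0:ℝ) ×ˢ Set.Ioi (0:ℝ)))
    {P Q : ℝ} (hP : 0 < P) (hQ : 0 < Q) :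
    deriv (fun a => deriv (fun b => auxG13 s k1 k2 k3 F a b Q 1 1 1) 1) P
      = (1/P) ^ k2 * (1/Q) ^ k3 / P *
        (P^2 * d1 (d1 F) (P, Q) + P * d1 F (P, Q) - k2^2 * F (P, Q)) := by
  have hne : (1:ℝ)/P ≠ 0 := one_div_ne_zero hP.ne'
  have hEq : (fun a => deriv (fun b => auxG13 s k1 k2 k3 F a b Q 1 1 1) 1)
      =ᶠ[nhds P] (fun a => (1/a) ^ k2 * (1/Q) ^ k3 * (a * d1 F (a, Q) + k2 * F (a, Q))) :=
    Filter.eventuallyEq_of_mem (Ioi_mem_nhds hP) (fun a ha => inner1 hF hQ ha)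
  rw [hEq.deriv_eq]
  have hinv : HasDerivAt (fun a : ℝ => 1/a) (-(1/P^2)) P := by
    simpa [one_div] using hasDerivAt_inv hP.ne'
  have hα : HasDerivAt (fun a : ℝ => (1/a) ^ k2) (-(1/P^2) * k2 * (1/P) ^ (k2-1)) P := by
    have := hinv.rpow_const (p := k2) (Or.inl hne)
    convert this using 1 <;> ring
  have hd1c : HasDerivAt (fun a : ℝ => d1 F (a, Q))
      (d1 (d1 F) (P, Q) * 1 + d2 (d1 F) (P, Q) * 0) P :=
    hasDerivAt_comp2 (u := fun a => a) (v := fun _ => Q) (d1 F)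
      (diffAt_d12 hF (p := (P, Q)) ⟨hP, hQ⟩).1 (hasDerivAt_id P) (hasDerivAt_const P Q)
  have hFc : HasDerivAt (fun a : ℝ => F (a, Q))
      (d1 F (P, Q) * 1 + d2 F (P, Q) * 0) P :=
    hasDerivAt_comp2 (u := fun a => a) (v := fun _ => Q) F
      (diffAt_of_contDiffOn hF (p := (P, Q)) ⟨hP, hQ⟩) (hasDerivAt_id P) (hasDerivAt_const P Q)
  have hmid : HasDerivAt (fun a : ℝ => a * d1 F (a, Q) + k2 * F (a, Q))
      ((1 * d1 F (P, Q) + P * (d1 (d1 F) (P, Q) * 1 + d2 (d1 F) (P, Q) * 0)) +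
        k2 * (d1 F (P, Q) * 1 + d2 F (P, Q) * 0)) P :=
    ((hasDerivAt_id P).fun_mul hd1c).add (hFc.const_mul k2)
  have htot := (hα.mul_const (((1:ℝ)/Q) ^ k3)).fun_mul hmid
  rw [htot.deriv]
  have hr : ((1:ℝ)/P) ^ k2 = (1/P) ^ (k2-1) * (1/P) := by
    rw [← Real.rpow_add_one hne (k2-1)]; ring_nf
  rw [hr]
  field_simp
  ring

lemma inner2 (hF : ContDiffOn ℝ 2 F (Set.Ioi (0:ℝ) ×ˢ Set.Ioi (0:ℝ)))
    {P : ℝ} (hP : 0 < P) {a : ℝ} (ha : 0 < a) :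
    deriv (fun b => auxG13 s k1 k2 k3 F P 1 a b 1 1) 1
      = (1/P) ^ k2 * (1/a) ^ k3 * (a * d2 F (P, a) + k3 * F (P, a)) := by
  have hne : (1:ℝ)/a ≠ 0 := one_div_ne_zero ha.ne'
  have hd : DifferentiableAt ℝ F (P, a * 1) := by
    simpa using diffAt_of_contDiffOn hF (p := (P, a)) ⟨hP, ha⟩
  have hu : HasDerivAt (fun b : ℝ => a * b) a 1 := by
    simpa using (hasDerivAt_id (1:ℝ)).const_mul a
  have h1 : HasDerivAt (fun b : ℝ => F (P, a * b))
      (d1 F (P, a * 1) * 0 + d2 F (P, a * 1) * a) 1 :=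
    hasDerivAt_comp2 (u := fun _ => P) (v := fun b => a * b) F hd (hasDerivAt_const 1 P) hu
  have hb : HasDerivAt (fun b : ℝ => b / a) (1 / a) 1 := (hasDerivAt_id (1:ℝ)).div_const a
  have h2 : HasDerivAt (fun b : ℝ => (b / a) ^ k3) (k3 * ((1:ℝ)/a) ^ (k3 - 1) * (1 / a)) 1 := by
    have := hb.rpow_const (p := k3) (Or.inl hne)
    convert this using 1 <;> ring
  have h3 := ((h1.mul_const (((1:ℝ)/P) ^ k2)).fun_mul h2)
  have hfun : (fun b => auxG13 s k1 k2 k3 F P 1 a b 1 1)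
      = fun b : ℝ => F (P, a * b) * ((1:ℝ)/P) ^ k2 * (b / a) ^ k3 := by
    funext b; simp [auxG13]
  rw [hfun, h3.deriv]
  have hr : ((1:ℝ)/a) ^ (k3 - 1) * (1 / a) = (1 / a) ^ k3 := by
    rw [← Real.rpow_add_one hne (k3 - 1)]; ring_nf
  simp only [mul_one]
  rw [show k3 * ((1:ℝ)/a) ^ (k3 - 1) * (1 / a) = k3 * (((1:ℝ)/a) ^ (k3 - 1) * (1 / a)) by ring,
    hr]
  ring

lemma outer2 (hF : ContDiffOn ℝ 2 F (Set.Ioi (0:ℝ) ×ˢ Set.Ioi (0:ℝ)))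
    {P Q : ℝ} (hP : 0 < P) (hQ : 0 < Q) :
    deriv (fun a => deriv (fun b => auxG13 s k1 k2 k3 F P 1 a b 1 1) 1) Q
      = (1/P) ^ k2 * (1/Q) ^ k3 / Q *
        (Q^2 * d2 (d2 F) (P, Q) + Q * d2 F (P, Q) - k3^2 * F (P, Q)) := by
  have hne : (1:ℝ)/Q ≠ 0 := one_div_ne_zero hQ.ne'
  have hEq : (fun a => deriv (fun b => auxG13 s k1 k2 k3 F P 1 a b 1 1) 1)
      =ᶠ[nhds Q] (fun a => (1/P) ^ k2 * (1/a) ^ k3 * (a * d2 F (P, a) + k3 * F (P, a))) :=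
    Filter.eventuallyEq_of_mem (Ioi_mem_nhds hQ) (fun a ha => inner2 hF hP ha)
  rw [hEq.deriv_eq]
  have hinv : HasDerivAt (fun a : ℝ => 1/a) (-(1/Q^2)) Q := by
    simpa [one_div] using hasDerivAt_inv hQ.ne'
  have hα : HasDerivAt (fun a : ℝ => (1/a) ^ k3) (-(1/Q^2) * k3 * (1/Q) ^ (k3-1)) Q := by
    have := hinv.rpow_const (p := k3) (Or.inl hne)
    convert this using 1 <;> ring
  have hd2c : HasDerivAt (fun a : ℝ => d2 F (P, a))
      (d1 (d2 F) (P, Q) * 0 + d2 (d2 F) (P, Q) * 1) Q :=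
    hasDerivAt_comp2 (u := fun _ => P) (v := fun a => a) (d2 F)
      (diffAt_d12 hF (p := (P, Q)) ⟨hP, hQ⟩).2 (hasDerivAt_const Q P) (hasDerivAt_id Q)
  have hFc : HasDerivAt (fun a : ℝ => F (P, a))
      (d1 F (P, Q) * 0 + d2 F (P, Q) * 1) Q :=
    hasDerivAt_comp2 (u := fun _ => P) (v := fun a => a) F
      (diffAt_of_contDiffOn hF (p := (P, Q)) ⟨hP, hQ⟩) (hasDerivAt_const Q P) (hasDerivAt_id Q)
  have hmid : HasDerivAt (fun a : ℝ => a * d2 F (P, a) + k3 * F (P, a))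
      ((1 * d2 F (P, Q) + Q * (d1 (d2 F) (P, Q) * 0 + d2 (d2 F) (P, Q) * 1)) +
        k3 * (d1 F (P, Q) * 0 + d2 F (P, Q) * 1)) Q :=
    ((hasDerivAt_id Q).fun_mul hd2c).add (hFc.const_mul k3)
  have htot := ((hα.const_mul (((1:ℝ)/P) ^ k2)).fun_mul hmid)
  rw [htot.deriv]
  have hr : ((1:ℝ)/Q) ^ k3 = (1/Q) ^ (k3-1) * (1/Q) := by
    rw [← Real.rpow_add_one hne (k3-1)]; ring_nf
  rw [hr]
  field_simp
  ring

lemma inner3 (hF : ContDiffOn ℝ 2 F (Set.Ioi (0:ℝ) ×ˢ Set.Ioi (0:ℝ)))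
    {P Q : ℝ} (hP : 0 < P) (hQ : 0 < Q) {a : ℝ} (ha : 0 < a) :
    deriv (fun b => auxG13 s k1 k2 k3 F P 1 Q 1 a b) 1
      = (1/P) ^ k2 * (1/Q) ^ k3 * (1/a) ^ k1 * a ^ s *
        ((k1 + s) * F (P/a, Q/a) - (P/a) * d1 F (P/a, Q/a) - (Q/a) * d2 F (P/a, Q/a)) := by
  have hne : (1:ℝ)/a ≠ 0 := one_div_ne_zero ha.ne'
  have hd : DifferentiableAt ℝ F (P / (a * 1), Q / (a * 1)) := by
    have : (0:ℝ) < P / (a * 1) := by positivity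
    have h2 : (0:ℝ) < Q / (a * 1) := by positivity
    exact diffAt_of_contDiffOn hF ⟨this, h2⟩
  have hab : HasDerivAt (fun b : ℝ => a * b) a 1 := by
    simpa using (hasDerivAt_id (1:ℝ)).const_mul a
  have hU : HasDerivAt (fun b : ℝ => P / (a * b)) (-(P/a)) 1 := by
    have := (hasDerivAt_const (1:ℝ) P).fun_div hab (by positivity)
    refine this.congr_deriv ?_
    field_simp
    ring
  have hV : HasDerivAt (fun b : ℝ => Q / (a * b)) (-(Q/a)) 1 := by
    have := (hasDerivAt_const (1:ℝ) Q).fun_div hab (by positivity)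
    refine this.congr_deriv ?_
    field_simp
    ring
  have hFc : HasDerivAt (fun b : ℝ => F (P / (a * b), Q / (a * b)))
      (d1 F (P / (a*1), Q / (a*1)) * (-(P/a)) + d2 F (P / (a*1), Q / (a*1)) * (-(Q/a))) 1 :=
    hasDerivAt_comp2 (u := fun b => P / (a * b)) (v := fun b => Q / (a * b)) F hd hU hV
  have hb : HasDerivAt (fun b : ℝ => b / a) (1 / a) 1 := (hasDerivAt_id (1:ℝ)).div_const a
  have hk1d : HasDerivAt (fun b : ℝ => (b / a) ^ k1) (k1 * ((1:ℝ)/a) ^ (k1 - 1) * (1 / a)) 1 := by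
    have := hb.rpow_const (p := k1) (Or.inl hne)
    convert this using 1 <;> ring
  have hsd : HasDerivAt (fun b : ℝ => (a * b) ^ s) (s * (a*1) ^ (s - 1) * a) 1 := by
    have := hab.rpow_const (p := s) (Or.inl (by positivity : a * (1:ℝ) ≠ 0))
    convert this using 1 <;> ring
  have htot := (((hFc.mul_const (((1:ℝ)/P) ^ k2)).mul_const (((1:ℝ)/Q) ^ k3)).fun_mul hk1d).fun_mul hsd
  have hfun : (fun b => auxG13 s k1 k2 k3 F P 1 Q 1 a b)
      = fun b : ℝ => F (P / (a * b), Q / (a * b)) * ((1:ℝ)/P) ^ k2 * ((1:ℝ)/Q) ^ k3 *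
          (b / a) ^ k1 * (a * b) ^ s := by
    funext b; simp [auxG13]
  rw [hfun, htot.deriv]
  have hr : ((1:ℝ)/a) ^ k1 = (1/a) ^ (k1 - 1) * (1/a) := by
    rw [← Real.rpow_add_one hne (k1 - 1)]; ring_nf
  have hr2 : a ^ s = a ^ (s - 1) * a := by
    rw [← Real.rpow_add_one ha.ne' (s - 1)]; ring_nf
  simp only [mul_one]
  rw [hr, hr2]
  ring

lemma outer3 (hF : ContDiffOn ℝ 2 F (Set.Ioi (0:ℝ) ×ˢ Set.Ioi (0:ℝ)))
    {P Q : ℝ} (hP : 0 < P) (hQ : 0 < Q) :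
    deriv (fun a => deriv (fun b => auxG13 s k1 k2 k3 F P 1 Q 1 a b) 1) 1
      = (1/P) ^ k2 * (1/Q) ^ k3 *
        (P^2 * d1 (d1 F) (P, Q) + P * Q * (d2 (d1 F) (P, Q) + d1 (d2 F) (P, Q)) +
          Q^2 * d2 (d2 F) (P, Q) + (1 - 2*s) * (P * d1 F (P, Q) + Q * d2 F (P, Q)) +
          (s^2 - k1^2) * F (P, Q)) := by
  have hEq : (fun a => deriv (fun b => auxG13 s k1 k2 k3 F P 1 Q 1 a b) 1)
      =ᶠ[nhds 1] (fun a => (1/P) ^ k2 * (1/Q) ^ k3 * (1/a) ^ k1 * a ^ s *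
        ((k1 + s) * F (P/a, Q/a) - (P/a) * d1 F (P/a, Q/a) - (Q/a) * d2 F (P/a, Q/a))) :=
    Filter.eventuallyEq_of_mem (Ioi_mem_nhds one_pos) (fun a ha => inner3 hF hP hQ ha)
  rw [hEq.deriv_eq]
  have hd : DifferentiableAt ℝ F (P / 1, Q / 1) := by
    have h1 : (0:ℝ) < P / 1 := by positivity
    have h2 : (0:ℝ) < Q / 1 := by positivity
    exact diffAt_of_contDiffOn hF ⟨h1, h2⟩
  have hd1 : DifferentiableAt ℝ (d1 F) (P / 1, Q / 1) ∧
      DifferentiableAt ℝ (d2 F) (P / 1, Q / 1) := by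
    have h1 : (0:ℝ) < P / 1 := by positivity
    have h2 : (0:ℝ) < Q / 1 := by positivity
    exact diffAt_d12 hF ⟨h1, h2⟩
  have hPa : HasDerivAt (fun a : ℝ => P / a) (-P) 1 := by
    have := (hasDerivAt_const (1:ℝ) P).fun_div (hasDerivAt_id 1) one_ne_zero
    refine this.congr_deriv ?_
    norm_num
  have hQa : HasDerivAt (fun a : ℝ => Q / a) (-Q) 1 := by
    have := (hasDerivAt_const (1:ℝ) Q).fun_div (hasDerivAt_id 1) one_ne_zero
    refine this.congr_deriv ?_
    norm_num
  have hFc : HasDerivAt (fun a : ℝ => F (P/a, Q/a))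
      (d1 F (P/1, Q/1) * (-P) + d2 F (P/1, Q/1) * (-Q)) 1 :=
    hasDerivAt_comp2 (u := fun a => P / a) (v := fun a => Q / a) F hd hPa hQa
  have hF1c : HasDerivAt (fun a : ℝ => d1 F (P/a, Q/a))
      (d1 (d1 F) (P/1, Q/1) * (-P) + d2 (d1 F) (P/1, Q/1) * (-Q)) 1 :=
    hasDerivAt_comp2 (u := fun a => P / a) (v := fun a => Q / a) (d1 F) hd1.1 hPa hQa
  have hF2c : HasDerivAt (fun a : ℝ => d2 F (P/a, Q/a))
      (d1 (d2 F) (P/1, Q/1) * (-P) + d2 (d2 F) (P/1, Q/1) * (-Q)) 1 :=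
    hasDerivAt_comp2 (u := fun a => P / a) (v := fun a => Q / a) (d2 F) hd1.2 hPa hQa
  have hinv : HasDerivAt (fun a : ℝ => 1/a) (-(1/(1:ℝ)^2)) 1 := by
    simpa [one_div] using hasDerivAt_inv (one_ne_zero : (1:ℝ) ≠ 0)
  have hk1d : HasDerivAt (fun a : ℝ => (1/a) ^ k1) (-(1/(1:ℝ)^2) * k1 * (1/(1:ℝ)) ^ (k1-1)) 1 := by
    have := hinv.rpow_const (p := k1) (Or.inl (by norm_num))
    convert this using 1 <;> ring
  have hsd : HasDerivAt (fun a : ℝ => a ^ s) (s * (1:ℝ) ^ (s-1)) 1 := by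
    simpa using Real.hasDerivAt_rpow_const (x := (1:ℝ)) (p := s) (Or.inl one_ne_zero)
  have hbr : HasDerivAt (fun a : ℝ =>
      (k1 + s) * F (P/a, Q/a) - (P/a) * d1 F (P/a, Q/a) - (Q/a) * d2 F (P/a, Q/a))
      ((k1 + s) * (d1 F (P/1, Q/1) * (-P) + d2 F (P/1, Q/1) * (-Q)) -
        ((-P) * d1 F (P/1, Q/1) + (P/1) * (d1 (d1 F) (P/1, Q/1) * (-P) + d2 (d1 F) (P/1, Q/1) * (-Q))) -
        ((-Q) * d2 F (P/1, Q/1) + (Q/1) * (d1 (d2 F) (P/1, Q/1) * (-P) + d2 (d2 F) (P/1, Q/1) * (-Q)))) 1 :=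
    ((hFc.const_mul (k1 + s)).sub (hPa.fun_mul hF1c)).sub (hQa.fun_mul hF2c)
  have hpow : HasDerivAt (fun a : ℝ => (1/P) ^ k2 * (1/Q) ^ k3 * (1/a) ^ k1 * a ^ s)
      (((1/P) ^ k2 * (1/Q) ^ k3 * (-(1/(1:ℝ)^2) * k1 * (1/(1:ℝ)) ^ (k1-1))) * (1:ℝ) ^ s +
        ((1/P) ^ k2 * (1/Q) ^ k3 * (1/(1:ℝ)) ^ k1) * (s * (1:ℝ) ^ (s-1))) 1 :=
    (hk1d.const_mul ((1/P) ^ k2 * (1/Q) ^ k3)).fun_mul hsd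
  have htot := hpow.fun_mul hbr
  rw [htot.deriv]
  norm_num
  ring

lemma workhorse {t : ℝ} (ht : 1 < t) (hF : ContDiffOn ℝ 2 F (Set.Ioi (0:ℝ) ×ˢ Set.Ioi (0:ℝ)))
    {A B c x u v : ℝ} (hA : 0 < A) (hB : 0 < B) (hc : 0 < c) (hx : t < x)
    (hu : u = A * (x-1) / x) (hv : v = B * (x-t) / x) :
    hitchinOp t s k1 k2 k3 (fun y => (c*y) ^ s * F (A*(y-1)/y, B*(y-t)/y)) x
      = c ^ s * x ^ (s-1) * (
        (1-t)*x/(x-1) * (u^2 * d1 (d1 F) (u,v) + u * d1 F (u,v) - k2^2 * F (u,v))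
        + t*(t-1)*x/(x-t) * (v^2 * d2 (d2 F) (u,v) + v * d2 F (u,v) - k3^2 * F (u,v))
        + t * (u^2 * d1 (d1 F) (u,v) + u*v*(d2 (d1 F) (u,v) + d1 (d2 F) (u,v))
            + v^2 * d2 (d2 F) (u,v) + (1-2*s)*(u * d1 F (u,v) + v * d2 F (u,v))
            + (s^2-k1^2) * F (u,v))
        + x*(2*s+1)*(u * d1 F (u,v) + t*v * d2 F (u,v)) - s*(s+1)*(1+t)*x*F (u,v)) := by
  have h0t : (0:ℝ) < t := by linarith
  have hx1 : (1:ℝ) < x := by linarith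
  have hx0 : (0:ℝ) < x := by linarith
  have hxt0 : (0:ℝ) < x - t := by linarith
  have hx10 : (0:ℝ) < x - 1 := by linarith
  -- derivative of f on Ioi t
  have hf' : ∀ y ∈ Ioi t, HasDerivAt (fun y => (c*y) ^ s * F (A*(y-1)/y, B*(y-t)/y))
      (c^s * y^(s-1) * (s * F (A*(y-1)/y, B*(y-t)/y)
        + A/y * d1 F (A*(y-1)/y, B*(y-t)/y) + B*t/y * d2 F (A*(y-1)/y, B*(y-t)/y))) y := by
    intro y hy
    have hy1 : (1:ℝ) < y := lt_trans ht hy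
    have hy0 : (0:ℝ) < y := by linarith
    have hyt : (0:ℝ) < y - t := by simp only [mem_Ioi] at hy; linarith
    have hup : (0:ℝ) < A*(y-1)/y := div_pos (mul_pos hA (by linarith)) hy0
    have hvp : (0:ℝ) < B*(y-t)/y := div_pos (mul_pos hB hyt) hy0
    have hu' : HasDerivAt (fun y => A*(y-1)/y) ((A*1*y - A*(y-1)*1)/y^2) y :=
      (((hasDerivAt_id y).sub_const 1).const_mul A).fun_div (hasDerivAt_id y) hy0.ne'
    have hv' : HasDerivAt (fun y => B*(y-t)/y) ((B*1*y - B*(y-t)*1)/y^2) y :=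
      (((hasDerivAt_id y).sub_const t).const_mul B).fun_div (hasDerivAt_id y) hy0.ne'
    have hFc : HasDerivAt (fun y => F (A*(y-1)/y, B*(y-t)/y))
        (d1 F (A*(y-1)/y, B*(y-t)/y) * ((A*1*y - A*(y-1)*1)/y^2)
          + d2 F (A*(y-1)/y, B*(y-t)/y) * ((B*1*y - B*(y-t)*1)/y^2)) y :=
      hasDerivAt_comp2 (u := fun y => A*(y-1)/y) (v := fun y => B*(y-t)/y) F
        (diffAt_of_contDiffOn hF ⟨hup, hvp⟩) hu' hv'
    have hcy : HasDerivAt (fun y : ℝ => (c*y) ^ s) ((c*1) * s * (c*y)^(s-1)) y := by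
      have := ((hasDerivAt_id y).const_mul c).rpow_const (p := s)
        (Or.inl (by positivity : c * y ≠ 0))
      simp only [id] at this
      convert this using 1 <;> ring
    have htot := hcy.fun_mul hFc
    refine htot.congr_deriv ?_
    rw [Real.mul_rpow hc.le hy0.le, Real.mul_rpow hc.le hy0.le,
      show (s:ℝ) = (s-1)+1 by ring, Real.rpow_add_one hc.ne' (s-1),
      Real.rpow_add_one hy0.ne' (s-1)]
    ring_nf
    field_simp
  -- replace inner deriv by the closed form
  have hcongr : deriv (fun y => y * (y-1) * (y-t) *
        deriv (fun y => (c*y) ^ s * F (A*(y-1)/y, B*(y-t)/y)) y) x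
      = deriv (fun y => y * (y-1) * (y-t) * (c^s * y^(s-1) * (s * F (A*(y-1)/y, B*(y-t)/y)
        + A/y * d1 F (A*(y-1)/y, B*(y-t)/y) + B*t/y * d2 F (A*(y-1)/y, B*(y-t)/y)))) x :=
    Filter.EventuallyEq.deriv_eq (Filter.eventuallyEq_of_mem (Ioi_mem_nhds hx)
      (fun y hy => by rw [(hf' y hy).deriv]))
  have hup : (0:ℝ) < A*(x-1)/x := div_pos (mul_pos hA hx10) hx0
  have hvp : (0:ℝ) < B*(x-t)/x := div_pos (mul_pos hB hxt0) hx0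
  have hu' : HasDerivAt (fun y => A*(y-1)/y) ((A*1*x - A*(x-1)*1)/x^2) x :=
    (((hasDerivAt_id x).sub_const 1).const_mul A).fun_div (hasDerivAt_id x) hx0.ne'
  have hv' : HasDerivAt (fun y => B*(y-t)/y) ((B*1*x - B*(x-t)*1)/x^2) x :=
    (((hasDerivAt_id x).sub_const t).const_mul B).fun_div (hasDerivAt_id x) hx0.ne'
  have hFc : HasDerivAt (fun y => F (A*(y-1)/y, B*(y-t)/y))
      (d1 F (A*(x-1)/x, B*(x-t)/x) * ((A*1*x - A*(x-1)*1)/x^2)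
        + d2 F (A*(x-1)/x, B*(x-t)/x) * ((B*1*x - B*(x-t)*1)/x^2)) x :=
    hasDerivAt_comp2 (u := fun y => A*(y-1)/y) (v := fun y => B*(y-t)/y) F
      (diffAt_of_contDiffOn hF ⟨hup, hvp⟩) hu' hv'
  have hF1c : HasDerivAt (fun y => d1 F (A*(y-1)/y, B*(y-t)/y))
      (d1 (d1 F) (A*(x-1)/x, B*(x-t)/x) * ((A*1*x - A*(x-1)*1)/x^2)
        + d2 (d1 F) (A*(x-1)/x, B*(x-t)/x) * ((B*1*x - B*(x-t)*1)/x^2)) x :=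
    hasDerivAt_comp2 (u := fun y => A*(y-1)/y) (v := fun y => B*(y-t)/y) (d1 F)
      (diffAt_d12 hF (p := (A*(x-1)/x, B*(x-t)/x)) ⟨hup, hvp⟩).1 hu' hv'
  have hF2c : HasDerivAt (fun y => d2 F (A*(y-1)/y, B*(y-t)/y))
      (d1 (d2 F) (A*(x-1)/x, B*(x-t)/x) * ((A*1*x - A*(x-1)*1)/x^2)
        + d2 (d2 F) (A*(x-1)/x, B*(x-t)/x) * ((B*1*x - B*(x-t)*1)/x^2)) x :=
    hasDerivAt_comp2 (u := fun y => A*(y-1)/y) (v := fun y => B*(y-t)/y) (d2 F)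
      (diffAt_d12 hF (p := (A*(x-1)/x, B*(x-t)/x)) ⟨hup, hvp⟩).2 hu' hv'
  have hcub : HasDerivAt (fun y : ℝ => y * (y-1) * (y-t))
      ((1 * (x-1) + x * 1) * (x-t) + x * (x-1) * 1) x :=
    (((hasDerivAt_id x).fun_mul ((hasDerivAt_id x).sub_const 1)).fun_mul ((hasDerivAt_id x).sub_const t))
  have hpow : HasDerivAt (fun y : ℝ => y ^ (s-1)) ((s-1) * x ^ (s-1-1)) x :=
    Real.hasDerivAt_rpow_const (Or.inl hx0.ne')
  have hA' : HasDerivAt (fun y : ℝ => A/y) ((0*x - A*1)/x^2) x :=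
    (hasDerivAt_const x A).fun_div (hasDerivAt_id x) hx0.ne'
  have hB' : HasDerivAt (fun y : ℝ => B*t/y) ((0*x - B*t*1)/x^2) x :=
    (hasDerivAt_const x (B*t)).fun_div (hasDerivAt_id x) hx0.ne'
  have hbr := ((hFc.const_mul s).fun_add (hA'.fun_mul hF1c)).fun_add (hB'.fun_mul hF2c)
  have hinner := (hpow.const_mul (c^s)).fun_mul hbr
  have htot := hcub.fun_mul hinner
  simp only [hitchinOp]
  rw [hcongr, htot.deriv, hu, hv]
  have e2 : (c*x) ^ s = c ^ s * (x ^ (s-1-1) * x * x) := by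
    rw [Real.mul_rpow hc.le hx0.le, ← Real.rpow_add_one hx0.ne' (s-1-1),
      ← Real.rpow_add_one hx0.ne' (s-1-1+1)]
    ring_nf
  have e1 : x ^ (s-1) = x ^ (s-1-1) * x := by
    rw [← Real.rpow_add_one hx0.ne' (s-1-1)]; ring_nf
  rw [e2, e1]
  set F0 := F (A*(x-1)/x, B*(x-t)/x) with hF0
  set F1 := d1 F (A*(x-1)/x, B*(x-t)/x) with hF1
  set F2 := d2 F (A*(x-1)/x, B*(x-t)/x) with hF2
  set F11 := d1 (d1 F) (A*(x-1)/x, B*(x-t)/x) with hF11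
  set F12 := d2 (d1 F) (A*(x-1)/x, B*(x-t)/x) with hF12
  set F21 := d1 (d2 F) (A*(x-1)/x, B*(x-t)/x) with hF21
  set F22 := d2 (d2 F) (A*(x-1)/x, B*(x-t)/x) with hF22
  set X := x ^ (s-1-1) with hXdef
  set C := c ^ s with hCdef
  field_simp
  ring

lemma hitchinOp_congr {t s k1 k2 k3 : ℝ} {f g : ℝ → ℝ} (hfg : Set.EqOn f g (Ioi t))
    {x : ℝ} (hx : t < x) :
    hitchinOp t s k1 k2 k3 f x = hitchinOp t s k1 k2 k3 g x := by
  have hfx : f x = g x := hfg hx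
  have houter : deriv (fun y => y * (y-1) * (y-t) * deriv f y) x
      = deriv (fun y => y * (y-1) * (y-t) * deriv g y) x := by
    apply Filter.EventuallyEq.deriv_eq
    apply Filter.eventuallyEq_of_mem (Ioi_mem_nhds hx)
    intro y hy
    have hder : deriv f y = deriv g y := by
      apply Filter.EventuallyEq.deriv_eq
      exact Filter.eventuallyEq_of_mem (Ioi_mem_nhds hy) (fun z hz => hfg hz)
    simp only [hder]
  unfold hitchinOp
  rw [houter, hfx]

lemma sliceMain {t : ℝ} (ht : 1 < t) (hF : ContDiffOn ℝ 2 F (Set.Ioi (0:ℝ) ×ˢ Set.Ioi (0:ℝ)))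
    {u0 v0 x c A B P0 : ℝ} (hx : t < x) (hc : 0 < c) (hA : 0 < A) (hB : 0 < B)
    (hueq : u0 = A*(x-1)/x) (hveq : v0 = B*(x-t)/x)
    (hE1 : u0^2 * d1 (d1 F) (u0,v0) + u0 * d1 F (u0,v0) - k2^2 * F (u0,v0)
      = u0 * (u0^2 * d1 (d1 F) (u0,v0) + u0 * v0 * (d2 (d1 F) (u0,v0) + d1 (d2 F) (u0,v0)) +
          v0^2 * d2 (d2 F) (u0,v0) + (1 - 2*s) * (u0 * d1 F (u0,v0) + v0 * d2 F (u0,v0)) +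
          (s^2 - k1^2) * F (u0,v0)))
    (hE2 : v0^2 * d2 (d2 F) (u0,v0) + v0 * d2 F (u0,v0) - k3^2 * F (u0,v0)
      = v0 * (u0^2 * d1 (d1 F) (u0,v0) + u0 * v0 * (d2 (d1 F) (u0,v0) + d1 (d2 F) (u0,v0)) +
          v0^2 * d2 (d2 F) (u0,v0) + (1 - 2*s) * (u0 * d1 F (u0,v0) + v0 * d2 F (u0,v0)) +
          (s^2 - k1^2) * F (u0,v0)))
    (hPs : P0 ^ s = c ^ s * (x ^ (s-1) * x))
    (hN : (1-t)*x*u0/(x-1) + t*(t-1)*x*v0/(x-t) + t = x*t^2/P0) :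
    hitchinOp t s k1 k2 k3 (fun y => (c*y) ^ s * F (A*(y-1)/y, B*(y-t)/y)) x
      = P0 ^ s * (t^2/P0 *
          (u0^2 * d1 (d1 F) (u0,v0) + u0 * v0 * (d2 (d1 F) (u0,v0) + d1 (d2 F) (u0,v0)) +
            v0^2 * d2 (d2 F) (u0,v0) + (1 - 2*s) * (u0 * d1 F (u0,v0) + v0 * d2 F (u0,v0)) +
            (s^2 - k1^2) * F (u0,v0))
        + (2*s+1) * (u0 * d1 F (u0,v0) + t * v0 * d2 F (u0,v0))
        - s*(s+1)*(1+t) * F (u0,v0)) := by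
  rw [workhorse ht hF hA hB hc hx hueq hveq, hPs]
  linear_combination (c ^ s * x ^ (s-1)) *
    ( ((1-t)*x/(x-1)) * hE1 + (t*(t-1)*x/(x-t)) * hE2
    + (u0^2 * d1 (d1 F) (u0,v0) + u0 * v0 * (d2 (d1 F) (u0,v0) + d1 (d2 F) (u0,v0)) +
        v0^2 * d2 (d2 F) (u0,v0) + (1 - 2*s) * (u0 * d1 F (u0,v0) + v0 * d2 F (u0,v0)) +
        (s^2 - k1^2) * F (u0,v0)) * hN )

/-- Theorem 3.3.2 (proof): if `G` satisfies `∂²G/∂u1∂v1 = ∂²G/∂u2∂v2 = ∂²G/∂u3∂v3` on the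
positive octant, then `K = (x1x2x3)^s F(u,v)` satisfies `D_{x1}K = D_{x2}K = D_{x3}K`. -/
theorem kern13_D_equations (t : ℝ) (ht : 1 < t) (s k1 k2 k3 : ℝ)
    (F : ℝ × ℝ → ℝ)
    (hF : ContDiffOn ℝ 2 F (Set.Ioi (0:ℝ) ×ˢ Set.Ioi (0:ℝ)))
    (hG : ∀ u1 v1 u2 v2 u3 v3 : ℝ, 0 < u1 → 0 < v1 → 0 < u2 → 0 < v2 → 0 < u3 → 0 < v3 →
      deriv (fun a => deriv (fun b => auxG13 s k1 k2 k3 F a b u2 v2 u3 v3) v1) u1 =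
        deriv (fun a => deriv (fun b => auxG13 s k1 k2 k3 F u1 v1 a b u3 v3) v2) u2 ∧
      deriv (fun a => deriv (fun b => auxG13 s k1 k2 k3 F u1 v1 a b u3 v3) v2) u2 =
        deriv (fun a => deriv (fun b => auxG13 s k1 k2 k3 F u1 v1 u2 v2 a b) v3) u3) :
    ∀ x1 x2 x3 : ℝ, t < x1 → t < x2 → t < x3 →
      hitchinOp t s k1 k2 k3 (fun x => kern13 t s F x x2 x3) x1 =
        hitchinOp t s k1 k2 k3 (fun x => kern13 t s F x1 x x3) x2 ∧
      hitchinOp t s k1 k2 k3 (fun x => kern13 t s F x1 x x3) x2 =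
        hitchinOp t s k1 k2 k3 (fun x => kern13 t s F x1 x2 x) x3 := by
  intro x1 x2 x3 hx1 hx2 hx3
  have h0t : (0:ℝ) < t := by linarith
  have ht1 : (0:ℝ) < t - 1 := by linarith
  have hx10 : (0:ℝ) < x1 := by linarith
  have hx20 : (0:ℝ) < x2 := by linarith
  have hx30 : (0:ℝ) < x3 := by linarith
  have hx11 : (0:ℝ) < x1 - 1 := by linarith
  have hx21 : (0:ℝ) < x2 - 1 := by linarith
  have hx31 : (0:ℝ) < x3 - 1 := by linarith
  have hx1t : (0:ℝ) < x1 - t := by linarith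
  have hx2t : (0:ℝ) < x2 - t := by linarith
  have hx3t : (0:ℝ) < x3 - t := by linarith
  obtain ⟨u0, hu0def⟩ : ∃ u : ℝ, u = t^2*(x1-1)*(x2-1)*(x3-1)/((t-1)^2*(x1*x2*x3)) := ⟨_, rfl⟩
  obtain ⟨v0, hv0def⟩ : ∃ v : ℝ, v = (x1-t)*(x2-t)*(x3-t)/((t-1)^2*(x1*x2*x3)) := ⟨_, rfl⟩
  have hu0 : 0 < u0 := by
    rw [hu0def]
    exact div_pos (by positivity)
      (mul_pos (pow_pos ht1 2) (mul_pos (mul_pos hx10 hx20) hx30))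
  have hv0 : 0 < v0 := by
    rw [hv0def]
    exact div_pos (mul_pos (mul_pos hx1t hx2t) hx3t)
      (mul_pos (pow_pos ht1 2) (mul_pos (mul_pos hx10 hx20) hx30))
  obtain ⟨hg1, hg2⟩ := hG u0 1 v0 1 1 1 hu0 one_pos hv0 one_pos one_pos one_pos
  rw [outer1 hF hu0 hv0, outer2 hF hu0 hv0] at hg1
  rw [outer2 hF hu0 hv0, outer3 hF hu0 hv0] at hg2
  have hWpos : (0:ℝ) < (1/u0)^k2 * (1/v0)^k3 :=
    mul_pos (Real.rpow_pos_of_pos (one_div_pos.mpr hu0) k2)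
      (Real.rpow_pos_of_pos (one_div_pos.mpr hv0) k3)
  have hE2 : v0^2 * d2 (d2 F) (u0,v0) + v0 * d2 F (u0,v0) - k3^2 * F (u0,v0)
      = v0 * (u0^2 * d1 (d1 F) (u0,v0) + u0 * v0 * (d2 (d1 F) (u0,v0) + d1 (d2 F) (u0,v0)) +
          v0^2 * d2 (d2 F) (u0,v0) + (1 - 2*s) * (u0 * d1 F (u0,v0) + v0 * d2 F (u0,v0)) +
          (s^2 - k1^2) * F (u0,v0)) := by
    have key : (1/u0)^k2 * (1/v0)^k3 *
        (u0^2 * d1 (d1 F) (u0,v0) + u0 * v0 * (d2 (d1 F) (u0,v0) + d1 (d2 F) (u0,v0)) +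
          v0^2 * d2 (d2 F) (u0,v0) + (1 - 2*s) * (u0 * d1 F (u0,v0) + v0 * d2 F (u0,v0)) +
          (s^2 - k1^2) * F (u0,v0))
        = (1/u0)^k2 * (1/v0)^k3 / v0 *
        (v0 * (u0^2 * d1 (d1 F) (u0,v0) + u0 * v0 * (d2 (d1 F) (u0,v0) + d1 (d2 F) (u0,v0)) +
          v0^2 * d2 (d2 F) (u0,v0) + (1 - 2*s) * (u0 * d1 F (u0,v0) + v0 * d2 F (u0,v0)) +
          (s^2 - k1^2) * F (u0,v0))) := by
      field_simp
    exact mul_left_cancel₀ (div_pos hWpos hv0).ne' (hg2.trans key)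
  have hE1 : u0^2 * d1 (d1 F) (u0,v0) + u0 * d1 F (u0,v0) - k2^2 * F (u0,v0)
      = u0 * (u0^2 * d1 (d1 F) (u0,v0) + u0 * v0 * (d2 (d1 F) (u0,v0) + d1 (d2 F) (u0,v0)) +
          v0^2 * d2 (d2 F) (u0,v0) + (1 - 2*s) * (u0 * d1 F (u0,v0) + v0 * d2 F (u0,v0)) +
          (s^2 - k1^2) * F (u0,v0)) := by
    have step : (1/u0)^k2 * (1/v0)^k3 / u0 *
        (u0^2 * d1 (d1 F) (u0,v0) + u0 * d1 F (u0,v0) - k2^2 * F (u0,v0))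
        = (1/u0)^k2 * (1/v0)^k3 / u0 *
        (u0 * (u0^2 * d1 (d1 F) (u0,v0) + u0 * v0 * (d2 (d1 F) (u0,v0) + d1 (d2 F) (u0,v0)) +
          v0^2 * d2 (d2 F) (u0,v0) + (1 - 2*s) * (u0 * d1 F (u0,v0) + v0 * d2 F (u0,v0)) +
          (s^2 - k1^2) * F (u0,v0))) := by
      rw [hg1, hE2]
      field_simp
    exact mul_left_cancel₀ (div_pos hWpos hu0).ne' step
  -- slice 1
  have hs1 : hitchinOp t s k1 k2 k3 (fun x => kern13 t s F x x2 x3) x1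
      = (x1*x2*x3) ^ s * (t^2/(x1*x2*x3) *
          (u0^2 * d1 (d1 F) (u0,v0) + u0 * v0 * (d2 (d1 F) (u0,v0) + d1 (d2 F) (u0,v0)) +
            v0^2 * d2 (d2 F) (u0,v0) + (1 - 2*s) * (u0 * d1 F (u0,v0) + v0 * d2 F (u0,v0)) +
            (s^2 - k1^2) * F (u0,v0))
        + (2*s+1) * (u0 * d1 F (u0,v0) + t * v0 * d2 F (u0,v0))
        - s*(s+1)*(1+t) * F (u0,v0)) := by
    have hk : Set.EqOn (fun x => kern13 t s F x x2 x3)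
        (fun y => ((x2*x3)*y) ^ s * F ((t^2*(x2-1)*(x3-1)/((t-1)^2*(x2*x3)))*(y-1)/y,
          ((x2-t)*(x3-t)/((t-1)^2*(x2*x3)))*(y-t)/y)) (Ioi t) := by
      intro x hx
      have hx0' : (0:ℝ) < x := lt_trans h0t hx
      simp only [kern13]
      rw [show t^2*(x-1)*(x2-1)*(x3-1)/((t-1)^2*(x*x2*x3))
            = (t^2*(x2-1)*(x3-1)/((t-1)^2*(x2*x3)))*(x-1)/x by
          field_simp; try ring; try tauto,
        show (x-t)*(x2-t)*(x3-t)/((t-1)^2*(x*x2*x3))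
            = ((x2-t)*(x3-t)/((t-1)^2*(x2*x3)))*(x-t)/x by
          field_simp; try ring; try tauto,
        show (x*x2*x3 : ℝ) = x2*x3*x by ring]
    rw [hitchinOp_congr hk hx1]
    exact sliceMain ht hF hx1 (mul_pos hx20 hx30)
      (div_pos (by positivity) (mul_pos (pow_pos ht1 2) (mul_pos hx20 hx30)))
      (div_pos (mul_pos hx2t hx3t) (mul_pos (pow_pos ht1 2) (mul_pos hx20 hx30)))
      (by rw [hu0def]; field_simp)
      (by rw [hv0def]; field_simp)
      hE1 hE2
      (by rw [show (x1*x2*x3 : ℝ) = x2*x3*x1 by ring,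
            Real.mul_rpow (mul_pos hx20 hx30).le hx10.le,
            ← Real.rpow_add_one hx10.ne' (s-1)]
          ring_nf)
      (by rw [hu0def, hv0def]; field_simp; ring)
  -- slice 2
  have hs2 : hitchinOp t s k1 k2 k3 (fun x => kern13 t s F x1 x x3) x2
      = (x1*x2*x3) ^ s * (t^2/(x1*x2*x3) *
          (u0^2 * d1 (d1 F) (u0,v0) + u0 * v0 * (d2 (d1 F) (u0,v0) + d1 (d2 F) (u0,v0)) +
            v0^2 * d2 (d2 F) (u0,v0) + (1 - 2*s) * (u0 * d1 F (u0,v0) + v0 * d2 F (u0,v0)) +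
            (s^2 - k1^2) * F (u0,v0))
        + (2*s+1) * (u0 * d1 F (u0,v0) + t * v0 * d2 F (u0,v0))
        - s*(s+1)*(1+t) * F (u0,v0)) := by
    have hk : Set.EqOn (fun x => kern13 t s F x1 x x3)
        (fun y => ((x1*x3)*y) ^ s * F ((t^2*(x1-1)*(x3-1)/((t-1)^2*(x1*x3)))*(y-1)/y,
          ((x1-t)*(x3-t)/((t-1)^2*(x1*x3)))*(y-t)/y)) (Ioi t) := by
      intro x hx
      have hx0' : (0:ℝ) < x := lt_trans h0t hx
      simp only [kern13]
      rw [show t^2*(x1-1)*(x-1)*(x3-1)/((t-1)^2*(x1*x*x3))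
            = (t^2*(x1-1)*(x3-1)/((t-1)^2*(x1*x3)))*(x-1)/x by
          field_simp; try ring; try tauto,
        show (x1-t)*(x-t)*(x3-t)/((t-1)^2*(x1*x*x3))
            = ((x1-t)*(x3-t)/((t-1)^2*(x1*x3)))*(x-t)/x by
          field_simp; try ring; try tauto,
        show (x1*x*x3 : ℝ) = x1*x3*x by ring]
    rw [hitchinOp_congr hk hx2]
    exact sliceMain ht hF hx2 (mul_pos hx10 hx30)
      (div_pos (by positivity) (mul_pos (pow_pos ht1 2) (mul_pos hx10 hx30)))
      (div_pos (mul_pos hx1t hx3t) (mul_pos (pow_pos ht1 2) (mul_pos hx10 hx30)))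
      (by rw [hu0def]; field_simp)
      (by rw [hv0def]; field_simp)
      hE1 hE2
      (by rw [show (x1*x2*x3 : ℝ) = x1*x3*x2 by ring,
            Real.mul_rpow (mul_pos hx10 hx30).le hx20.le,
            ← Real.rpow_add_one hx20.ne' (s-1)]
          ring_nf)
      (by rw [hu0def, hv0def]; field_simp; ring)
  -- slice 3
  have hs3 : hitchinOp t s k1 k2 k3 (fun x => kern13 t s F x1 x2 x) x3
      = (x1*x2*x3) ^ s * (t^2/(x1*x2*x3) *
          (u0^2 * d1 (d1 F) (u0,v0) + u0 * v0 * (d2 (d1 F) (u0,v0) + d1 (d2 F) (u0,v0)) +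
            v0^2 * d2 (d2 F) (u0,v0) + (1 - 2*s) * (u0 * d1 F (u0,v0) + v0 * d2 F (u0,v0)) +
            (s^2 - k1^2) * F (u0,v0))
        + (2*s+1) * (u0 * d1 F (u0,v0) + t * v0 * d2 F (u0,v0))
        - s*(s+1)*(1+t) * F (u0,v0)) := by
    have hk : Set.EqOn (fun x => kern13 t s F x1 x2 x)
        (fun y => ((x1*x2)*y) ^ s * F ((t^2*(x1-1)*(x2-1)/((t-1)^2*(x1*x2)))*(y-1)/y,
          ((x1-t)*(x2-t)/((t-1)^2*(x1*x2)))*(y-t)/y)) (Ioi t) := by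
      intro x hx
      have hx0' : (0:ℝ) < x := lt_trans h0t hx
      simp only [kern13]
      rw [show t^2*(x1-1)*(x2-1)*(x-1)/((t-1)^2*(x1*x2*x))
            = (t^2*(x1-1)*(x2-1)/((t-1)^2*(x1*x2)))*(x-1)/x by
          field_simp; try ring; try tauto,
        show (x1-t)*(x2-t)*(x-t)/((t-1)^2*(x1*x2*x))
            = ((x1-t)*(x2-t)/((t-1)^2*(x1*x2)))*(x-t)/x by
          field_simp; try ring; try tauto]
    rw [hitchinOp_congr hk hx3]
    exact sliceMain ht hF hx3 (mul_pos hx10 hx20)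
      (div_pos (by positivity) (mul_pos (pow_pos ht1 2) (mul_pos hx10 hx20)))
      (div_pos (mul_pos hx1t hx2t) (mul_pos (pow_pos ht1 2) (mul_pos hx10 hx20)))
      (by rw [hu0def]; field_simp)
      (by rw [hv0def]; field_simp)
      hE1 hE2
      (by rw [show (x1*x2*x3 : ℝ) = x1*x2*x3 by ring,
            Real.mul_rpow (mul_pos hx10 hx20).le hx30.le,
            ← Real.rpow_add_one hx30.ne' (s-1)]
          ring_nf)
      (by rw [hu0def, hv0def]; field_simp; ring)
  exact ⟨hs1.trans hs2.symm, hs2.trans hs3.symm⟩
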